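/- Explicit evaluation of the generalized exponential sampling series with B₂ kernel applied to F⁰_π(x) = ½ sinc²(½ log x): for w > 0 and 1 < x < e^{1/w}, (S_w^{B₂} F⁰_π)(x) = (2w²/π²){ (π²/(4w²))(1 − w log x) + sin²(π/(2w)) · w log x }. -/

import Mathlib

open Real

/-- `sinc u = sin(πu)/(πu)`, `sinc 0 = 1`. -/
noncomputable def sinc (u : ℝ) : ℝ :=
  if u = 0 then 1 else Real.sin (π * u) / (π * u)

/-- The second-order Mellin spline `B₂(x) = (1 - |log x|)₊`. -/
noncomputable def B2 (x : ℝ) : ℝ := max (1 - |Real.log x|) 0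

/-- The Mellin–Fejér kernel `F⁰_π(x) = ½ sinc²(½ log x)`. -/
noncomputable def Fpi (x : ℝ) : ℝ := 1 / 2 * _root_.sinc (Real.log x / 2) ^ 2

/-- Explicit evaluation of the generalized exponential sampling series with kernel `B₂`
applied to `F⁰_π`, for `1 < x < e^{1/w}`. -/
theorem expSampling_B2_Fpi_explicit (w : ℝ) (hw : 0 < w) (x : ℝ)
    (hx1 : 1 < x) (hx2 : x < Real.exp (1 / w)) :
    ∑' k : ℤ, Fpi (Real.exp (k / w)) * B2 (Real.exp (-k) * x ^ w) =
      2 * w ^ 2 / π ^ 2 *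
        (π ^ 2 / (4 * w ^ 2) * (1 - w * Real.log x) +
          Real.sin (π / (2 * w)) ^ 2 * (w * Real.log x)) := by
  have hx0 : (0:ℝ) < x := lt_trans one_pos hx1
  have hlx : 0 < Real.log x := Real.log_pos hx1
  set t := w * Real.log x with ht
  have ht0 : 0 < t := mul_pos hw hlx
  have ht1 : t < 1 := by
    have h := Real.log_lt_log hx0 hx2
    rw [Real.log_exp] at h
    have := (mul_lt_mul_iff_right₀ hw).mpr h
    rw [mul_one_div, div_self (ne_of_gt hw)] at this
    exact this
  have hlog : ∀ k : ℤ, Real.log (Real.exp (-k) * x ^ w) = t - k := by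
    intro k
    rw [Real.log_mul (Real.exp_ne_zero _) (by positivity), Real.log_exp,
      Real.log_rpow hx0]
    ring
  have hzero : ∀ k : ℤ, k ∉ ({0, 1} : Finset ℤ) →
      Fpi (Real.exp (k / w)) * B2 (Real.exp (-k) * x ^ w) = 0 := by
    intro k hk
    simp only [Finset.mem_insert, Finset.mem_singleton, not_or] at hk
    have hcase : k ≤ -1 ∨ 2 ≤ k := by omega
    have hB : B2 (Real.exp (-k) * x ^ w) = 0 := by
      unfold B2
      rw [hlog k]
      have h1 : 1 ≤ |t - k| := by
        rcases hcase with h | h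
        · have : (k:ℝ) ≤ -1 := by exact_mod_cast h
          exact le_abs.mpr (Or.inl (by linarith))
        · have : (2:ℝ) ≤ k := by exact_mod_cast h
          exact le_abs.mpr (Or.inr (by linarith))
      exact max_eq_right (by linarith)
    rw [hB, mul_zero]
  rw [tsum_eq_sum hzero]
  have h01 : (0:ℤ) ∉ ({1} : Finset ℤ) := by decide
  rw [Finset.sum_insert h01, Finset.sum_singleton]
  have hF0 : Fpi (Real.exp ((0:ℤ) / w)) = 1 / 2 := by
    norm_num [Fpi, _root_.sinc]
  have hB0 : B2 (Real.exp (-(0:ℤ)) * x ^ w) = 1 - t := by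
    unfold B2
    rw [hlog 0]
    push_cast
    rw [sub_zero, abs_of_pos ht0]
    exact max_eq_left (by linarith)
  have hB1 : B2 (Real.exp (-(1:ℤ)) * x ^ w) = t := by
    unfold B2
    rw [hlog 1]
    push_cast
    rw [abs_of_neg (by linarith : t - 1 < 0)]
    rw [show 1 - -(t - 1) = t by ring]
    exact max_eq_left (by linarith)
  have hF1 : Fpi (Real.exp ((1:ℤ) / w)) =
      1 / 2 * (Real.sin (π / (2 * w)) / (π / (2 * w))) ^ 2 := by
    unfold Fpi _root_.sinc
    rw [Real.log_exp]
    push_cast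
    have hne : (1:ℝ) / w / 2 ≠ 0 := by positivity
    rw [if_neg hne]
    have : π * (1 / w / 2) = π / (2 * w) := by rw [div_div, mul_one_div, mul_comm w 2]
    rw [this]
  rw [hF0, hB0, hF1, hB1]
  have hpi : (π:ℝ) ≠ 0 := Real.pi_ne_zero
  have hwne : w ≠ 0 := ne_of_gt hw
  field_simp
  ring
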